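/- Let P be a real polynomial of degree at most d, let I ⊂ ℝ be a compact interval, and let E ⊂ I be a measurable set of positive measure. Then sup_I |P| ≤ (4|I|/|E|)^d · sup_E |P|, where |I| and |E| denote Lebesgue measure. -/

import Mathlib

open MeasureTheory Set
open Polynomial

lemma cheb_eval_rec (n : ℕ) (z : ℝ) :
    (Chebyshev.T ℝ ((n:ℤ)+2)).eval z = 2*z*(Chebyshev.T ℝ ((n:ℤ)+1)).eval z
      - (Chebyshev.T ℝ (n:ℤ)).eval z := by
  rw [Chebyshev.T_add_two]; simp

lemma cheb_grow (z : ℝ) (hz : 1 ≤ z) : ∀ d : ℕ,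
    1 ≤ (Chebyshev.T ℝ (d:ℤ)).eval z ∧
    (Chebyshev.T ℝ (d:ℤ)).eval z ≤ (Chebyshev.T ℝ ((d:ℤ)+1)).eval z ∧
    (Chebyshev.T ℝ (d:ℤ)).eval z ≤ (2*z)^d
  | 0 => by
    norm_num [Chebyshev.T_zero, Chebyshev.T_one]
    exact hz
  | 1 => by
    have h2 := cheb_eval_rec 0 z
    norm_num [Chebyshev.T_zero, Chebyshev.T_one] at h2 ⊢
    refine ⟨hz, ?_, by nlinarith⟩
    rw [h2]; nlinarith
  | (n+2) => by
    obtain ⟨h1, h2, h3⟩ := cheb_grow z hz (n+1)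
    obtain ⟨g1, g2, g3⟩ := cheb_grow z hz n
    have hr := cheb_eval_rec n z
    have hr2 := cheb_eval_rec (n+1) z
    push_cast at hr hr2 h1 h2 h3 g1 g2 g3 ⊢
    have e1 : 1 ≤ (Chebyshev.T ℝ ((n:ℤ)+2)).eval z := by
      rw [hr]; nlinarith
    have e1' : (Chebyshev.T ℝ ((n:ℤ)+1)).eval z ≤ (Chebyshev.T ℝ ((n:ℤ)+2)).eval z := by
      rw [hr]; nlinarith
    refine ⟨e1, ?_, ?_⟩
    · rw [show (n:ℤ)+2+1 = (n:ℤ)+1+2 by ring, hr2,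
        show (n:ℤ)+1+1 = (n:ℤ)+2 by ring]
      nlinarith
    · rw [hr]
      calc 2*z*(Chebyshev.T ℝ ((n:ℤ)+1)).eval z - (Chebyshev.T ℝ (n:ℤ)).eval z
          ≤ 2*z*(2*z)^(n+1) := by nlinarith [pow_nonneg (by linarith : (0:ℝ) ≤ 2*z) (n+1)]
        _ = (2*z)^(n+2) := by ring

lemma cheb_degree_le : ∀ d : ℕ, (Chebyshev.T ℝ (d:ℤ)).degree ≤ (d : ℕ)
  | 0 => by simp [Chebyshev.T_zero, degree_one]
  | 1 => by simp [Chebyshev.T_one, degree_X]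
  | (n+2) => by
    have h1 := cheb_degree_le (n+1)
    have h0 := cheb_degree_le n
    rw [show ((n+2:ℕ):ℤ) = (n:ℤ)+2 by push_cast; ring, Chebyshev.T_add_two]
    refine (degree_sub_le _ _).trans (max_le ?_ ?_)
    · refine (degree_mul_le _ _).trans ?_
      have hX : (2*X:ℝ[X]).degree ≤ 1 := by compute_degree
      have h1' : (Chebyshev.T ℝ ((n:ℤ)+1)).degree ≤ ((n+1:ℕ) : WithBot ℕ) := by
        push_cast; exact_mod_cast h1
      calc (2*X:ℝ[X]).degree + (Chebyshev.T ℝ ((n:ℤ)+1)).degree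
          ≤ 1 + ((n+1:ℕ) : WithBot ℕ) := add_le_add hX h1'
        _ = ((n+2:ℕ) : WithBot ℕ) := by push_cast; ring
    · exact h0.trans (by exact_mod_cast Nat.le_succ _ |>.trans (Nat.le_succ _) : ((n:ℕ):WithBot ℕ) ≤ ((n+2:ℕ):WithBot ℕ))

lemma cheb_degree_lt (d : ℕ) : (Chebyshev.T ℝ (d:ℤ)).degree < (d+1 : ℕ) :=
  (cheb_degree_le d).trans_lt (by exact_mod_cast Nat.lt_succ_self d)

open Finset in
lemma sign_prod {n : ℕ} (v : Fin n → ℝ) (hv : StrictAnti v) (j : Fin n) :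
    ∏ i ∈ univ.erase j, (v j - v i) = (-1)^(j:ℕ) * ∏ i ∈ univ.erase j, |v j - v i| := by
  have hcongr : ∀ i ∈ univ.erase j, v j - v i =
      (if i < j then (-1:ℝ) else 1) * |v j - v i| := by
    intro i hi
    rcases lt_or_gt_of_ne (Finset.ne_of_mem_erase hi) with h | h
    · have h2 : v j < v i := hv h
      rw [if_pos h, abs_of_neg (by linarith : v j - v i < 0)]; ring
    · have h2 : v i < v j := hv h
      rw [if_neg (not_lt.mpr h.le), one_mul, abs_of_pos (by linarith)]
  rw [Finset.prod_congr rfl hcongr, Finset.prod_mul_distrib]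
  congr 1
  rw [Finset.prod_ite, Finset.prod_const, Finset.prod_const, one_pow, mul_one]
  congr 1
  have : (univ.erase j).filter (fun i => i < j) = Finset.Iio j := by
    ext i
    simp only [Finset.mem_filter, Finset.mem_erase, Finset.mem_univ, Finset.mem_Iio, true_and,
      and_iff_right_iff_imp]
    exact fun h => ⟨ne_of_lt h, trivial⟩
  rw [this, Fin.card_Iio]

open Finset Real in
lemma cheb_sum (d : ℕ) (hd : 1 ≤ d) (z : ℝ) (hz : 1 ≤ z) :
    ∑ j : Fin (d+1), ∏ i ∈ univ.erase j,
      ((z - cos (i*π/d)) / |cos (j*π/d) - cos (i*π/d)|) ≤ (2*z)^d := by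
  have hdR : (0:ℝ) < d := by exact_mod_cast hd
  set v : Fin (d+1) → ℝ := fun j => cos (j*π/d) with hv
  have hmem : ∀ j : Fin (d+1), ((j:ℝ)*π/d) ∈ Set.Icc 0 π := by
    intro j
    constructor
    · positivity
    · rw [div_le_iff₀ hdR]
      have : (j:ℝ) ≤ d := by exact_mod_cast Fin.is_le j
      nlinarith [pi_pos]
  have hanti : StrictAnti v := by
    intro j k hjk
    refine Real.strictAntiOn_cos (hmem j) (hmem k) ?_
    have hjk' : (j:ℝ) < (k:ℝ) := by exact_mod_cast hjk
    have := pi_pos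
    apply div_lt_div_of_pos_right ?_ hdR
    nlinarith
  have hinj : Set.InjOn v ↑(univ : Finset (Fin (d+1))) := hanti.injective.injOn
  have hdeg : (Chebyshev.T ℝ (d:ℤ)).degree < (univ : Finset (Fin (d+1))).card := by
    rw [Finset.card_univ, Fintype.card_fin]
    exact cheb_degree_lt d
  have hinterp := Lagrange.eq_interpolate hinj hdeg
  have heval := congrArg (Polynomial.eval z) hinterp
  rw [Lagrange.interpolate_apply, Polynomial.eval_finset_sum] at heval
  have hvals : ∀ j : Fin (d+1), (Chebyshev.T ℝ (d:ℤ)).eval (v j) = (-1)^(j:ℕ) := by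
    intro j
    have harg : ((d:ℤ):ℝ) * ((j:ℝ)*π/d) = (j:ℕ) * π := by
      push_cast
      field_simp
    rw [hv]
    simp only []
    rw [Chebyshev.T_real_cos, harg]
    simpa using Real.cos_add_nat_mul_pi 0 (j:ℕ)
  have hbasis : ∀ j : Fin (d+1),
      Polynomial.eval z (Polynomial.C ((Chebyshev.T ℝ (d:ℤ)).eval (v j))
        * Lagrange.basis univ v j)
      = ∏ i ∈ univ.erase j, ((z - v i) / |v j - v i|) := by
    intro j
    rw [Polynomial.eval_mul, Polynomial.eval_C, hvals j, Lagrange.basis, Polynomial.eval_prod]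
    have hb : ∀ i ∈ univ.erase j,
        Polynomial.eval z (Lagrange.basisDivisor (v j) (v i))
          = (v j - v i)⁻¹ * (z - v i) := by
      intro i _
      simp [Lagrange.basisDivisor]
    rw [Finset.prod_congr rfl hb, Finset.prod_mul_distrib, Finset.prod_inv_distrib,
      sign_prod v hanti j, Finset.prod_div_distrib, mul_inv, ← mul_assoc,
      ← mul_assoc, mul_inv_cancel₀ (by positivity : ((-1:ℝ)^(j:ℕ)) ≠ 0), one_mul,
      mul_comm, div_eq_mul_inv]
  calc ∑ j : Fin (d+1), ∏ i ∈ univ.erase j, ((z - cos (i*π/d)) / |cos (j*π/d) - cos (i*π/d)|)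
      = ∑ j : Fin (d+1), Polynomial.eval z (Polynomial.C ((Chebyshev.T ℝ (d:ℤ)).eval (v j))
          * Lagrange.basis univ v j) := by
        refine Finset.sum_congr rfl fun j _ => ?_
        rw [hbasis j]
    _ = (Chebyshev.T ℝ (d:ℤ)).eval z := heval.symm
    _ ≤ (2*z)^d := (cheb_grow z hz d).2.2


noncomputable def Fm (E : Set ℝ) (x : ℝ) : ℝ := (volume (E ∩ Iic x)).toReal

lemma Fm_nonneg (E : Set ℝ) (x : ℝ) : 0 ≤ Fm E x := ENNReal.toReal_nonneg

lemma Fm_mono {E : Set ℝ} (hfin : volume E ≠ ⊤) : Monotone (Fm E) := by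
  intro x y hxy
  apply ENNReal.toReal_mono
  · exact ne_top_of_le_ne_top hfin (measure_mono inter_subset_left)
  · exact measure_mono (inter_subset_inter_right _ (Iic_subset_Iic.mpr hxy))

lemma Fm_diff {E : Set ℝ} (hEm : MeasurableSet E) (hfin : volume E ≠ ⊤) {x y : ℝ}
    (hxy : y ≤ x) : Fm E x - Fm E y = (volume (E ∩ Ioc y x)).toReal := by
  have hsplit : E ∩ Iic x = (E ∩ Iic y) ∪ (E ∩ Ioc y x) := by
    rw [← inter_union_distrib_left, Iic_union_Ioc_eq_Iic hxy]
  have hdisj : Disjoint (E ∩ Iic y) (E ∩ Ioc y x) :=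
    (Iic_disjoint_Ioc le_rfl).mono inter_subset_right inter_subset_right
  have hmeas : volume (E ∩ Iic x) = volume (E ∩ Iic y) + volume (E ∩ Ioc y x) := by
    rw [hsplit, measure_union hdisj (hEm.inter measurableSet_Ioc)]
  have h1 : volume (E ∩ Iic y) ≠ ⊤ := ne_top_of_le_ne_top hfin (measure_mono inter_subset_left)
  have h2 : volume (E ∩ Ioc y x) ≠ ⊤ := ne_top_of_le_ne_top hfin (measure_mono inter_subset_left)
  rw [Fm, Fm, hmeas, ENNReal.toReal_add h1 h2]
  ring

lemma Fm_lip {E : Set ℝ} (hEm : MeasurableSet E) (hfin : volume E ≠ ⊤) {x y : ℝ}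
    (hxy : y ≤ x) : Fm E x - Fm E y ≤ x - y := by
  rw [Fm_diff hEm hfin hxy]
  calc (volume (E ∩ Ioc y x)).toReal ≤ (volume (Ioc y x)).toReal := by
        apply ENNReal.toReal_mono
        · rw [Real.volume_Ioc]; exact ENNReal.ofReal_ne_top
        · exact measure_mono inter_subset_right
    _ = x - y := by rw [Real.volume_Ioc, ENNReal.toReal_ofReal (by linarith)]

lemma Fm_cont {E : Set ℝ} (hEm : MeasurableSet E) (hfin : volume E ≠ ⊤) :
    Continuous (Fm E) := by
  have : LipschitzWith 1 (Fm E) := by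
    apply LipschitzWith.of_dist_le_mul
    intro x y
    rw [Real.dist_eq, Real.dist_eq, NNReal.coe_one, one_mul]
    rcases le_total x y with h | h
    · rw [abs_of_nonpos (by linarith [Fm_mono hfin h] : Fm E x - Fm E y ≤ 0),
        abs_of_nonpos (by linarith)]
      have := Fm_lip hEm hfin h
      linarith
    · rw [abs_of_nonneg (by linarith [Fm_mono hfin h] : 0 ≤ Fm E x - Fm E y),
        abs_of_nonneg (by linarith)]
      exact Fm_lip hEm hfin h
  exact this.continuous


open MeasureTheory Set Real Finset in
lemma remez_left (P : Polynomial ℝ) (d : ℕ) (hP : P.natDegree ≤ d)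
    (a b : ℝ) (hab : a < b) (E : Set ℝ) (hE : E ⊆ Icc a b) (hEm : MeasurableSet E)
    (hEpos : 0 < volume E) :
    |P.eval a| ≤ (4 * (b - a) / (volume E).toReal) ^ d *
      sSup ((fun y => |P.eval y|) '' E) := by
  classical
  have hfin : volume E ≠ ⊤ :=
    ne_top_of_le_ne_top (by rw [Real.volume_Icc]; exact ENNReal.ofReal_ne_top)
      (measure_mono hE)
  set μ := (volume E).toReal with hμdef
  have hμpos : 0 < μ := ENNReal.toReal_pos hEpos.ne' hfin
  have hμle : μ ≤ b - a := by
    have h1 : volume E ≤ volume (Icc a b) := measure_mono hE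
    rw [Real.volume_Icc] at h1
    have := ENNReal.toReal_mono ENNReal.ofReal_ne_top h1
    rwa [ENNReal.toReal_ofReal (by linarith)] at this
  have hEne : E.Nonempty := nonempty_of_measure_ne_zero hEpos.ne'
  have hPcont : Continuous fun y : ℝ => |P.eval y| :=
    continuous_abs.comp (Polynomial.continuous P)
  have hbdd : BddAbove ((fun y => |P.eval y|) '' E) :=
    (isCompact_Icc.bddAbove_image hPcont.continuousOn).mono (image_mono hE)
  set M := sSup ((fun y => |P.eval y|) '' E) with hMdef
  have hMle : ∀ y ∈ closure E, |P.eval y| ≤ M := by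
    intro y hy
    have hcl : closure E ⊆ {y | |P.eval y| ≤ M} := by
      apply closure_minimal ?_ (isClosed_le hPcont continuous_const)
      intro u hu
      exact le_csSup hbdd ⟨u, hu, rfl⟩
    exact hcl hy
  have hM0 : 0 ≤ M := by
    obtain ⟨u, hu⟩ := hEne
    exact le_trans (abs_nonneg _) (hMle u (subset_closure hu))
  rcases Nat.eq_zero_or_pos d with hd0 | hd
  · subst hd0
    obtain ⟨u, hu⟩ := hEne
    have hPc := Polynomial.eq_C_of_natDegree_eq_zero (Nat.le_zero.mp hP)
    have heq : P.eval a = P.eval u := by rw [hPc]; simp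
    rw [pow_zero, one_mul, heq]
    exact hMle u (subset_closure hu)
  -- main case
  have hdR : (0:ℝ) < d := by exact_mod_cast hd
  set e : Fin (d+1) → ℝ := fun j => Real.cos (j*π/d) with hedef
  set yv : Fin (d+1) → ℝ := fun j => (1 - e j)/2 with hyvdef
  have hmem : ∀ j : Fin (d+1), ((j:ℝ)*π/d) ∈ Set.Icc 0 π := by
    intro j
    constructor
    · positivity
    · rw [div_le_iff₀ hdR]
      have : (j:ℝ) ≤ d := by exact_mod_cast Fin.is_le j
      nlinarith [pi_pos]
  have hanti : StrictAnti e := by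
    intro j k hjk
    refine Real.strictAntiOn_cos (hmem j) (hmem k) ?_
    have hjk' : (j:ℝ) < (k:ℝ) := by exact_mod_cast hjk
    have := pi_pos
    apply div_lt_div_of_pos_right ?_ hdR
    nlinarith
  have he_abs : ∀ j, -1 ≤ e j ∧ e j ≤ 1 := fun j => ⟨neg_one_le_cos _, cos_le_one _⟩
  have hyv_mono : StrictMono yv := by
    intro i j hij
    have := hanti hij
    simp only [hyvdef]
    linarith
  have hyv0 : yv 0 = 0 := by
    simp only [hyvdef, hedef]
    norm_num
  have hyv_last : yv (Fin.last d) = 1 := by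
    simp only [hyvdef, hedef]
    have : ((Fin.last d : ℕ):ℝ) * π / d = π := by
      rw [Fin.val_last]
      field_simp
    rw [this, Real.cos_pi]
    norm_num
  have hyv01 : ∀ j, 0 ≤ yv j ∧ yv j ≤ 1 := by
    intro j
    constructor
    · rw [← hyv0]
      rcases eq_or_ne j 0 with h | h
      · rw [h]
      · exact (hyv_mono (Fin.pos_iff_ne_zero.mpr h)).le
    · rw [← hyv_last]
      rcases eq_or_lt_of_le (Fin.le_last j) with h | h
      · rw [h]
      · exact (hyv_mono h).le
  set S : Fin (d+1) → Set ℝ := fun j => {x | μ * yv j ≤ Fm E x} with hSdef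
  set t : Fin (d+1) → ℝ := fun j => if j = 0 then sInf E else sInf (S j) with htdef
  have hEbddBelow : BddBelow E := (bddBelow_Icc : BddBelow (Icc a b)).mono hE
  have hFm_inf : Fm E (sInf E) = 0 := by
    have hsub : E ∩ Iic (sInf E) ⊆ {sInf E} := by
      intro y ⟨hy1, hy2⟩
      exact le_antisymm hy2 (csInf_le hEbddBelow hy1)
    have := measure_mono_null (μ := volume) hsub Real.volume_singleton
    rw [Fm, this]
    simp
  have hFmb : Fm E b = μ := by
    have hEb : E ∩ Iic b = E := inter_eq_left.mpr fun y hy => mem_Iic.mpr (hE hy).2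
    rw [Fm, hEb]
  have hScl : ∀ j, IsClosed (S j) := fun j =>
    isClosed_le continuous_const (Fm_cont hEm hfin)
  have hSne : ∀ j, (S j).Nonempty := by
    intro j
    refine ⟨b, ?_⟩
    simp only [hSdef, Set.mem_setOf_eq, hFmb]
    nlinarith [(hyv01 j).2]
  have hSbdd : ∀ j, j ≠ 0 → BddBelow (S j) := by
    intro j hj
    refine ⟨a, fun x hx => ?_⟩
    by_contra hax
    push_neg at hax
    have hempty : E ∩ Iic x = ∅ := by
      ext y
      simp only [Set.mem_inter_iff, Set.mem_Iic, Set.mem_empty_iff_false, iff_false]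
      rintro ⟨hy1, hy2⟩
      exact absurd ((hE hy1).1.trans hy2) (not_le.mpr hax)
    have hFx : Fm E x = 0 := by rw [Fm, hempty]; simp
    simp only [hSdef, Set.mem_setOf_eq, hFx] at hx
    have hyvj : 0 < yv j := hyv0 ▸ hyv_mono (Fin.pos_iff_ne_zero.mpr hj)
    nlinarith
  have htS : ∀ j, j ≠ 0 → t j ∈ S j := by
    intro j hj
    simp only [htdef, if_neg hj]
    exact IsClosed.csInf_mem (hScl j) (hSne j) (hSbdd j hj)
  have hFt_ge : ∀ j, μ * yv j ≤ Fm E (t j) := by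
    intro j
    rcases eq_or_ne j 0 with h | h
    · rw [h, hyv0, mul_zero]
      exact Fm_nonneg E _
    · exact htS j h
  have hFt_le : ∀ j, Fm E (t j) ≤ μ * yv j := by
    intro j
    rcases eq_or_ne j 0 with h | h
    · rw [h, hyv0, mul_zero]
      simp only [htdef, if_pos]
      rw [hFm_inf]
    · by_contra hlt
      push_neg at hlt
      have hopen : IsOpen {x | μ * yv j < Fm E x} :=
        isOpen_lt continuous_const (Fm_cont hEm hfin)
      have hmemo : t j ∈ {x | μ * yv j < Fm E x} := hlt
      obtain ⟨ε, hε, hball⟩ := Metric.isOpen_iff.mp hopen _ hmemo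
      have htj : t j = sInf (S j) := by simp only [htdef, if_neg h]
      have hin : t j - ε/2 ∈ S j := by
        have hmb : t j - ε/2 ∈ Metric.ball (t j) ε := by
          rw [Metric.mem_ball, Real.dist_eq, abs_of_nonpos (by linarith)]
          linarith
        exact le_of_lt (show μ * yv j < Fm E (t j - ε/2) from hball hmb)
      have h4 : sInf (S j) ≤ t j - ε/2 := csInf_le (hSbdd j h) hin
      rw [← htj] at h4
      linarith
  have hFt : ∀ j, Fm E (t j) = μ * yv j := fun j => le_antisymm (hFt_le j) (hFt_ge j)
  have ht_closure : ∀ j, t j ∈ closure E := by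
    intro j
    rcases eq_or_ne j 0 with h | h
    · rw [h]
      simp only [htdef, if_pos]
      exact csInf_mem_closure hEne hEbddBelow
    · rw [Metric.mem_closure_iff]
      intro ε hε
      have htj : t j = sInf (S j) := by simp only [htdef, if_neg h]
      have hnotin : t j - ε/2 ∉ S j := by
        intro hin
        have h4 : sInf (S j) ≤ t j - ε/2 := csInf_le (hSbdd j h) hin
        rw [← htj] at h4
        linarith
      have hFlt : Fm E (t j - ε/2) < μ * yv j := by
        simpa [hSdef] using hnotin
      have hdiffpos : 0 < Fm E (t j) - Fm E (t j - ε/2) := by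
        rw [hFt j]; linarith
      rw [Fm_diff hEm hfin (by linarith : t j - ε/2 ≤ t j)] at hdiffpos
      have hne : (E ∩ Ioc (t j - ε/2) (t j)).Nonempty := by
        by_contra hcon
        rw [Set.not_nonempty_iff_eq_empty] at hcon
        rw [hcon] at hdiffpos
        simp at hdiffpos
      obtain ⟨y, hy1, hy2⟩ := hne
      refine ⟨y, hy1, ?_⟩
      rw [Real.dist_eq, abs_of_nonneg (by linarith [hy2.2] : 0 ≤ t j - y)]
      have := hy2.1
      linarith
  have hta : ∀ j, a ≤ t j := fun j =>
    ((closure_minimal hE isClosed_Icc) (ht_closure j)).1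
  have htb : ∀ j, t j ≤ b := fun j =>
    ((closure_minimal hE isClosed_Icc) (ht_closure j)).2
  have ht_mono_le : ∀ i j : Fin (d+1), i < j → t i ≤ t j := by
    intro i j hij
    by_contra hcon
    push_neg at hcon
    have h1 : Fm E (t j) ≤ Fm E (t i) := Fm_mono hfin hcon.le
    rw [hFt i, hFt j] at h1
    have := hyv_mono hij
    nlinarith
  have ht_sep : ∀ i j : Fin (d+1), i < j → μ * (yv j - yv i) ≤ t j - t i := by
    intro i j hij
    have h1 := Fm_lip hEm hfin (ht_mono_le i j hij)
    rw [hFt i, hFt j] at h1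
    linarith
  have ht_strict : StrictMono t := by
    intro i j hij
    have h1 := ht_sep i j hij
    have h2 := hyv_mono hij
    nlinarith
  set z : ℝ := 2*(b-a)/μ - 1 with hzdef
  have hz1 : 1 ≤ z := by
    have h2 : 2 ≤ 2*(b-a)/μ := by
      rw [le_div_iff₀ hμpos]
      linarith
    show 1 ≤ 2*(b-a)/μ - 1
    linarith
  have hμ2 : (0:ℝ) < μ/2 := by linarith
  have hnum : ∀ i : Fin (d+1), |a - t i| ≤ (μ/2) * (z - e i) := by
    intro i
    have h1 : t i ≤ b - μ * (1 - yv i) := by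
      rcases eq_or_lt_of_le (Fin.le_last i) with h | h
      · rw [h, hyv_last]
        simpa using htb (Fin.last d)
      · have := ht_sep i (Fin.last d) h
        rw [hyv_last] at this
        have hlb := htb (Fin.last d)
        linarith
    have heq : (μ/2) * (z - e i) = (b - a) - μ * (1 - yv i) := by
      have : yv i = (1 - e i)/2 := rfl
      rw [this]
      show μ/2 * (2*(b-a)/μ - 1 - e i) = b - a - μ * (1 - (1 - e i)/2)
      field_simp
      ring
    rw [abs_of_nonpos (by linarith [hta i] : a - t i ≤ 0), heq]
    linarith
  have hden : ∀ i j : Fin (d+1), i ≠ j → (μ/2) * |e j - e i| ≤ |t j - t i| := by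
    intro i j hij
    rcases lt_or_gt_of_ne hij with h | h
    · have h1 := ht_sep i j h
      have h2 : e j < e i := hanti h
      have h3 : t i ≤ t j := ht_mono_le i j h
      rw [abs_of_nonpos (by linarith), abs_of_nonneg (by linarith)]
      have : yv j - yv i = (e i - e j)/2 := by
        show (1 - e j)/2 - (1 - e i)/2 = (e i - e j)/2
        ring
      rw [this] at h1
      linarith
    · have h1 := ht_sep j i h
      have h2 : e i < e j := hanti h
      have h3 : t j ≤ t i := ht_mono_le j i h
      rw [abs_of_nonneg (by linarith), abs_of_nonpos (by linarith)]
      have : yv i - yv j = (e j - e i)/2 := by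
        show (1 - e i)/2 - (1 - e j)/2 = (e j - e i)/2
        ring
      rw [this] at h1
      linarith
  -- Lagrange interpolation at the nodes t
  have hinj : Set.InjOn t ↑(univ : Finset (Fin (d+1))) := ht_strict.injective.injOn
  have hdeg : P.degree < (univ : Finset (Fin (d+1))).card := by
    rw [Finset.card_univ, Fintype.card_fin]
    exact lt_of_le_of_lt Polynomial.degree_le_natDegree
      (by exact_mod_cast Nat.lt_succ_of_le hP)
  have hinterp := Lagrange.eq_interpolate (v := t) hinj hdeg
  have heval := congrArg (Polynomial.eval a) hinterp
  rw [Lagrange.interpolate_apply, Polynomial.eval_finset_sum] at heval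
  -- bound each term
  have hterm : ∀ j : Fin (d+1),
      |Polynomial.eval a (Polynomial.C (P.eval (t j)) * Lagrange.basis univ t j)|
      ≤ M * ∏ i ∈ univ.erase j, ((z - e i) / |e j - e i|) := by
    intro j
    rw [Polynomial.eval_mul, Polynomial.eval_C, abs_mul]
    have hb1 : |Polynomial.eval a (Lagrange.basis univ t j)|
        = ∏ i ∈ univ.erase j, (|a - t i| / |t j - t i|) := by
      rw [Lagrange.basis, Polynomial.eval_prod, Finset.abs_prod]
      refine Finset.prod_congr rfl fun i _ => ?_
      simp only [Lagrange.basisDivisor, Polynomial.eval_mul, Polynomial.eval_C,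
        Polynomial.eval_sub, Polynomial.eval_X]
      rw [abs_mul, abs_inv]
      rw [div_eq_mul_inv, mul_comm]
    have hprod : ∏ i ∈ univ.erase j, (|a - t i| / |t j - t i|)
        ≤ ∏ i ∈ univ.erase j, ((z - e i) / |e j - e i|) := by
      refine Finset.prod_le_prod (fun i _ => div_nonneg (abs_nonneg _) (abs_nonneg _))
        fun i hi => ?_
      have hine : i ≠ j := Finset.ne_of_mem_erase hi
      have habs : 0 < |e j - e i| := by
        rw [abs_pos, sub_ne_zero]
        exact fun hc => hine (hanti.injective hc).symm
      have hd2 : (0:ℝ) < (μ/2) * |e j - e i| := mul_pos hμ2 habs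
      have hstep : |a - t i| / |t j - t i| ≤ ((μ/2) * (z - e i)) / ((μ/2) * |e j - e i|) :=
        div_le_div₀ (mul_nonneg hμ2.le (by linarith [(he_abs i).2] : (0:ℝ) ≤ z - e i))
          (hnum i) hd2 (hden i j hine)
      rwa [mul_div_mul_left _ _ (ne_of_gt hμ2)] at hstep
    rw [hb1]
    exact mul_le_mul (hMle _ (ht_closure j)) hprod
      (Finset.prod_nonneg fun i _ => div_nonneg (abs_nonneg _) (abs_nonneg _)) hM0
  -- sum up
  have habs := Finset.abs_sum_le_sum_abs
    (fun j : Fin (d+1) => Polynomial.eval a (Polynomial.C (P.eval (t j))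
      * Lagrange.basis univ t j)) univ
  rw [← heval] at habs
  have hsum2 : ∑ j : Fin (d+1), |Polynomial.eval a (Polynomial.C (P.eval (t j))
      * Lagrange.basis univ t j)|
      ≤ M * ((2*z)^d) := by
    have h1 : ∑ j : Fin (d+1), |Polynomial.eval a (Polynomial.C (P.eval (t j))
        * Lagrange.basis univ t j)|
        ≤ ∑ j : Fin (d+1), M * ∏ i ∈ univ.erase j, ((z - e i) / |e j - e i|) :=
      Finset.sum_le_sum fun j _ => hterm j
    have h2 : ∑ j : Fin (d+1), M * ∏ i ∈ univ.erase j, ((z - e i) / |e j - e i|)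
        = M * ∑ j : Fin (d+1), ∏ i ∈ univ.erase j, ((z - e i) / |e j - e i|) := by
      rw [Finset.mul_sum]
    have h3 := cheb_sum d hd z hz1
    have h4 : M * (∑ j : Fin (d+1), ∏ i ∈ univ.erase j,
        ((z - e i) / |e j - e i|)) ≤ M * ((2*z)^d) :=
      mul_le_mul_of_nonneg_left h3 hM0
    linarith
  have hsum : |P.eval a| ≤ M * ((2*z)^d) := le_trans habs hsum2
  refine hsum.trans ?_
  rw [mul_comm]
  apply mul_le_mul_of_nonneg_right ?_ hM0
  apply pow_le_pow_left₀ (by linarith)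
  show 2*(2*(b-a)/μ - 1) ≤ 4*(b-a)/μ
  have h5 : 2*(2*(b-a)/μ) = 4*(b-a)/μ := by ring
  linarith

open MeasureTheory Set Real in
lemma remez_right (P : Polynomial ℝ) (d : ℕ) (hP : P.natDegree ≤ d)
    (a b : ℝ) (hab : a < b) (E : Set ℝ) (hE : E ⊆ Icc a b) (hEm : MeasurableSet E)
    (hEpos : 0 < volume E) :
    |P.eval b| ≤ (4 * (b - a) / (volume E).toReal) ^ d *
      sSup ((fun y => |P.eval y|) '' E) := by
  set Q : Polynomial ℝ := P.comp (-Polynomial.X) with hQdef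
  have hQeval : ∀ x : ℝ, Q.eval x = P.eval (-x) := by
    intro x
    rw [hQdef, Polynomial.eval_comp]
    simp
  have hQdeg : Q.natDegree ≤ d := by
    rw [hQdef]
    calc (P.comp (-Polynomial.X)).natDegree ≤ P.natDegree * (-Polynomial.X : Polynomial ℝ).natDegree :=
          Polynomial.natDegree_comp_le
      _ ≤ d := by
          rw [Polynomial.natDegree_neg, Polynomial.natDegree_X, mul_one]
          exact hP
  have hE' : -E ⊆ Icc (-b) (-a) := by
    intro x hx
    rw [Set.mem_neg] at hx
    have := hE hx
    exact ⟨by linarith [this.2], by linarith [this.1]⟩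
  have hEm' : MeasurableSet (-E) := hEm.neg
  have hvol : volume (-E) = volume E := Measure.measure_neg volume E
  have h := remez_left Q d hQdeg (-b) (-a) (by linarith) (-E) hE' hEm'
    (by rw [hvol]; exact hEpos)
  rw [hvol] at h
  have himg : ((fun y => |Q.eval y|) '' (-E)) = ((fun y => |P.eval y|) '' E) := by
    rw [show -E = Neg.neg '' E from Set.image_neg_eq_neg.symm, Set.image_image]
    refine Set.image_congr fun y _ => ?_
    rw [hQeval, neg_neg]
  rw [himg, hQeval, neg_neg, show -a - -b = b - a by ring] at h
  exact h

open MeasureTheory Set Real in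
theorem remez_inequality (P : Polynomial ℝ) (d : ℕ) (hP : P.natDegree ≤ d)
    (a b : ℝ) (hab : a < b) (E : Set ℝ) (hE : E ⊆ Icc a b) (hEm : MeasurableSet E)
    (hEpos : 0 < volume E) :
    ∀ x ∈ Icc a b,
      |P.eval x| ≤ (4 * (b - a) / (volume E).toReal) ^ d *
        sSup ((fun y => |P.eval y|) '' E) := by
  intro x hx
  have hfin : volume E ≠ ⊤ :=
    ne_top_of_le_ne_top (by rw [Real.volume_Icc]; exact ENNReal.ofReal_ne_top)
      (measure_mono hE)
  set m := (volume E).toReal with hmdef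
  have hm : 0 < m := ENNReal.toReal_pos hEpos.ne' hfin
  -- general helper facts
  have hPcont : Continuous fun y : ℝ => |P.eval y| :=
    continuous_abs.comp (Polynomial.continuous P)
  have hbdd : BddAbove ((fun y => |P.eval y|) '' E) :=
    (isCompact_Icc.bddAbove_image hPcont.continuousOn).mono (image_mono hE)
  set EL := E ∩ Icc a x with hELdef
  set ER := E ∩ Icc x b with hERdef
  have hELm : MeasurableSet EL := hEm.inter measurableSet_Icc
  have hERm : MeasurableSet ER := hEm.inter measurableSet_Icc
  have hELfin : volume EL ≠ ⊤ := ne_top_of_le_ne_top hfin (measure_mono inter_subset_left)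
  have hERfin : volume ER ≠ ⊤ := ne_top_of_le_ne_top hfin (measure_mono inter_subset_left)
  set mL := (volume EL).toReal with hmLdef
  set mR := (volume ER).toReal with hmRdef
  have hmL0 : 0 ≤ mL := ENNReal.toReal_nonneg
  have hmR0 : 0 ≤ mR := ENNReal.toReal_nonneg
  have hsplit : m ≤ mL + mR := by
    have hsub : E ⊆ EL ∪ ER := by
      intro y hy
      rcases le_total y x with h | h
      · exact Or.inl ⟨hy, (hE hy).1, h⟩
      · exact Or.inr ⟨hy, h, (hE hy).2⟩
    have h1 : volume E ≤ volume EL + volume ER :=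
      (measure_mono hsub).trans (measure_union_le EL ER)
    have h2 := ENNReal.toReal_mono (by
      exact ENNReal.add_ne_top.mpr ⟨hELfin, hERfin⟩) h1
    rwa [ENNReal.toReal_add hELfin hERfin] at h2
  have hmLle : mL ≤ x - a := by
    have h1 : volume EL ≤ volume (Icc a x) := measure_mono inter_subset_right
    rw [Real.volume_Icc] at h1
    have h2 := ENNReal.toReal_mono ENNReal.ofReal_ne_top h1
    rw [ENNReal.toReal_ofReal (by linarith [hx.1] : (0:ℝ) ≤ x - a)] at h2
    exact h2
  have hmRle : mR ≤ b - x := by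
    have h1 : volume ER ≤ volume (Icc x b) := measure_mono inter_subset_right
    rw [Real.volume_Icc] at h1
    have h2 := ENNReal.toReal_mono ENNReal.ofReal_ne_top h1
    rw [ENNReal.toReal_ofReal (by linarith [hx.2] : (0:ℝ) ≤ b - x)] at h2
    exact h2
  -- the two cases
  have hcases : (m * (b - x) ≤ mR * (b - a) ∧ 0 < mR) ∨
      (m * (x - a) ≤ mL * (b - a) ∧ 0 < mL) := by
    by_cases h1 : m * (b - x) ≤ mR * (b - a)
    · by_cases h2 : 0 < mR
      · exact Or.inl ⟨h1, h2⟩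
      · have hmR : mR = 0 := le_antisymm (not_lt.mp h2) hmR0
        rw [hmR] at h1
        have hxb : x = b := by nlinarith [hx.2]
        refine Or.inr ⟨?_, ?_⟩
        · have hEL : EL = E := by
            rw [hELdef, hxb]
            exact inter_eq_left.mpr hE
          rw [hmLdef, hEL, hxb]
        · have hEL : EL = E := by
            rw [hELdef, hxb]
            exact inter_eq_left.mpr hE
          rw [hmLdef, hEL]
          exact hm
    · push_neg at h1
      have key : m * (x - a) < mL * (b - a) := by nlinarith
      refine Or.inr ⟨key.le, ?_⟩
      by_contra hcon
      push_neg at hcon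
      have : mL = 0 := le_antisymm hcon hmL0
      rw [this] at key
      nlinarith [hx.1]
  rcases hcases with ⟨hratio, hpos⟩ | ⟨hratio, hpos⟩
  · -- right side, left endpoint x of [x, b]
    have hxb : x < b := by nlinarith
    have hERpos : 0 < volume ER := by
      rcases eq_or_lt_of_le (zero_le : 0 ≤ volume ER) with h | h
      · rw [hmRdef, ← h] at hpos
        simp at hpos
      · exact h
    have h := remez_left P d hP x b hxb ER inter_subset_right hERm hERpos
    have hERne : ER.Nonempty := nonempty_of_measure_ne_zero hERpos.ne'
    have hMle : sSup ((fun y => |P.eval y|) '' ER) ≤ sSup ((fun y => |P.eval y|) '' E) :=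
      csSup_le_csSup hbdd (hERne.image _) (image_mono inter_subset_left)
    have hM'0 : 0 ≤ sSup ((fun y => |P.eval y|) '' ER) := by
      obtain ⟨u, hu⟩ := hERne
      exact le_trans (abs_nonneg _)
        (le_csSup (hbdd.mono (image_mono inter_subset_left)) ⟨u, hu, rfl⟩)
    have hpow : (4 * (b - x) / mR) ^ d ≤ (4 * (b - a) / m) ^ d := by
      apply pow_le_pow_left₀ (div_nonneg (by linarith [hx.2]) hmR0)
      rw [div_le_div_iff₀ hpos hm]
      nlinarith
    calc |P.eval x| ≤ (4 * (b - x) / mR) ^ d * sSup ((fun y => |P.eval y|) '' ER) := h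
      _ ≤ (4 * (b - a) / m) ^ d * sSup ((fun y => |P.eval y|) '' E) :=
          mul_le_mul hpow hMle hM'0 (pow_nonneg (div_nonneg (by linarith) hm.le) d)
  · -- left side, right endpoint x of [a, x]
    have hax : a < x := by nlinarith
    have hELpos : 0 < volume EL := by
      rcases eq_or_lt_of_le (zero_le : 0 ≤ volume EL) with h | h
      · rw [hmLdef, ← h] at hpos
        simp at hpos
      · exact h
    have h := remez_right P d hP a x hax EL inter_subset_right hELm hELpos
    have hELne : EL.Nonempty := nonempty_of_measure_ne_zero hELpos.ne'
    have hMle : sSup ((fun y => |P.eval y|) '' EL) ≤ sSup ((fun y => |P.eval y|) '' E) :=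
      csSup_le_csSup hbdd (hELne.image _) (image_mono inter_subset_left)
    have hM'0 : 0 ≤ sSup ((fun y => |P.eval y|) '' EL) := by
      obtain ⟨u, hu⟩ := hELne
      exact le_trans (abs_nonneg _)
        (le_csSup (hbdd.mono (image_mono inter_subset_left)) ⟨u, hu, rfl⟩)
    have hpow : (4 * (x - a) / mL) ^ d ≤ (4 * (b - a) / m) ^ d := by
      apply pow_le_pow_left₀ (div_nonneg (by linarith [hx.1]) hmL0)
      rw [div_le_div_iff₀ hpos hm]
      nlinarith
    calc |P.eval x| ≤ (4 * (x - a) / mL) ^ d * sSup ((fun y => |P.eval y|) '' EL) := h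
      _ ≤ (4 * (b - a) / m) ^ d * sSup ((fun y => |P.eval y|) '' E) :=
          mul_le_mul hpow hMle hM'0 (pow_nonneg (div_nonneg (by linarith) hm.le) d)
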